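/- Let G be a graph, k ≥ 1 an integer, and C ⊆ E(G). Then C is a circuit of the k-circular matroid M_k(G) if and only if Δ(G⟨C⟩) = k and G⟨C⟩ has no isolated vertices, no leaves, and every component of G⟨C⟩ contains at least two cycles. -/

import Mathlib

open scoped Classical

/-- A finite multigraph: loops and parallel edges allowed. -/
structure Multigraph where
  V : Type
  E : Type
  [fintypeV : Fintype V]
  [fintypeE : Fintype E]
  ends : E → Sym2 V

attribute [instance] Multigraph.fintypeV Multigraph.fintypeE

namespace Multigraph

variable (G : Multigraph)

/-- Vertex support of an edge set: vertices incident to some edge of `X`. -/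
noncomputable def supp (X : Finset G.E) : Finset G.V :=
  Finset.univ.filter (fun v => ∃ e ∈ X, v ∈ G.ends e)

/-- `Δ` of the subgraph induced by the edge set `X`. -/
noncomputable def delta (X : Finset G.E) : ℤ := (X.card : ℤ) - (G.supp X).card

/-- `Δ(G) = |E(G)| - |V(G)|`. -/
noncomputable def deltaG : ℤ := (Fintype.card G.E : ℤ) - (Fintype.card G.V : ℤ)

/-- Degree of `v` in the edge set `X`: loops count twice. -/
noncomputable def degIn (X : Finset G.E) (v : G.V) : ℕ :=
  ∑ e ∈ X, (if G.ends e = Sym2.mk v v then 2 else if v ∈ G.ends e then 1 else 0)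

/-- `u` and `v` are joined by an edge of `X`. -/
def adjIn (X : Finset G.E) (u v : G.V) : Prop := ∃ e ∈ X, G.ends e = Sym2.mk u v

/-- Reachability using only edges of `X`. -/
def reachIn (X : Finset G.E) : G.V → G.V → Prop :=
  Relation.ReflTransGen (G.adjIn X)

/-- The edge set `X` induces a connected subgraph. -/
def ConnSet (X : Finset G.E) : Prop :=
  X.Nonempty ∧ ∀ u ∈ G.supp X, ∀ v ∈ G.supp X, G.reachIn X u v

/-- Edges of the component of the subgraph `(V, X)` containing vertex `v`. -/
noncomputable def compEdges (X : Finset G.E) (v : G.V) : Finset G.E :=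
  X.filter (fun f => ∃ u ∈ G.ends f, G.reachIn X v u)

/-- Vertices of the component of `v` in the graph `(V, X)` (all vertices kept). -/
noncomputable def compVerts (X : Finset G.E) (v : G.V) : Finset G.V :=
  Finset.univ.filter (fun u => G.reachIn X v u)

/-- `C` is (the edge set of) a cycle: connected, every vertex of degree 2. -/
def IsCycleSet (C : Finset G.E) : Prop :=
  G.ConnSet C ∧ ∀ v ∈ G.supp C, G.degIn C v = 2

/-- `T` induces a tree. -/
def IsTreeSet (T : Finset G.E) : Prop := G.ConnSet T ∧ G.delta T = -1

/-- The component of `v` in `(V, X)` is a tree (possibly a single vertex). -/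
def IsTreeCompAt (X : Finset G.E) (v : G.V) : Prop :=
  (G.compEdges X v).card + 1 = (G.compVerts X v).card

/-- The number of tree components of the graph `(V, X)`. -/
noncomputable def treeCount (X : Finset G.E) : ℕ :=
  (((Finset.univ : Finset G.V).filter (fun v => G.IsTreeCompAt X v)).image
    (fun v => G.compVerts X v)).card

/-- The graph `G` has no isolated vertices. -/
def NoIso : Prop := ∀ v : G.V, ∃ e : G.E, v ∈ G.ends e

/-- The graph `G` has no leaves. -/
def NoLeaf : Prop := ∀ v : G.V, G.degIn Finset.univ v ≠ 1

/-- The graph `G` is connected. -/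
def GConn : Prop := Nonempty G.V ∧ ∀ u v : G.V, G.reachIn Finset.univ u v

/-- `G` is a bicycle: connected, leafless, with `Δ(G) = 1`. -/
def IsBicycle : Prop := G.GConn ∧ G.NoLeaf ∧ G.deltaG = 1

/-- One round of deleting all edges incident to a leaf. -/
noncomputable def pruneStep (X : Finset G.E) : Finset G.E :=
  X.filter (fun e => ∀ v ∈ G.ends e, G.degIn X v ≠ 1)

/-- Edge set obtained from `G` by repeatedly deleting leaves until none remain. -/
noncomputable def kernelSet : Finset G.E :=
  G.pruneStep^[Fintype.card G.E] Finset.univ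

/-- `Δ` of the component of `G` containing `v`. -/
noncomputable def compDelta (v : G.V) : ℤ :=
  ((G.compEdges Finset.univ v).card : ℤ) - ((G.compVerts Finset.univ v).card : ℤ)

/-- The core `[G]`: union of the kernels of the components `A` with `Δ(A) ≥ 1`. -/
noncomputable def coreSet : Finset G.E :=
  G.kernelSet.filter (fun e => ∀ v ∈ G.ends e, 1 ≤ G.compDelta v)

/-- `P` is the edge set of an `(x,y)`-path. -/
def IsPathSet (P : Finset G.E) (x y : G.V) : Prop :=
  G.ConnSet P ∧ x ≠ y ∧ x ∈ G.supp P ∧ y ∈ G.supp P ∧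
  G.degIn P x = 1 ∧ G.degIn P y = 1 ∧
  ∀ v ∈ G.supp P, v ≠ x → v ≠ y → G.degIn P v = 2

/-- `C` induces a bicycle subgraph: connected, leafless, `Δ = 1`. -/
def IsBicycleSet (C : Finset G.E) : Prop :=
  G.ConnSet C ∧ (∀ v ∈ G.supp C, G.degIn C v ≠ 1) ∧ G.delta C = 1

/-- Circuits of the `k`-circular matroid `M_k(G)`: minimal nonempty edge sets `C`
with `|C| = |V(G⟨C⟩)| + k`, i.e. `Δ(G⟨C⟩) = k`. -/
def IsCircuitSet (k : ℕ) (C : Finset G.E) : Prop :=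
  (C.Nonempty ∧ G.delta C = (k : ℤ)) ∧
  ∀ D ⊂ C, ¬ (D.Nonempty ∧ G.delta D = (k : ℤ))

/-- Independent sets of `M_k(G)`. -/
def Indep (k : ℕ) (I : Finset G.E) : Prop := ∀ C ⊆ I, ¬ G.IsCircuitSet k C

/-- Bases of `M_k(G)`: maximal independent sets. -/
def IsBase (k : ℕ) (B : Finset G.E) : Prop :=
  G.Indep k B ∧ ∀ B' : Finset G.E, G.Indep k B' → B ⊆ B' → B' = B

/-- The matroid `M_k(G)` is connected: at least two elements and every two
elements lie on a common circuit. -/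
def MConn (k : ℕ) : Prop :=
  2 ≤ Fintype.card G.E ∧
  ∀ a b : G.E, ∃ C : Finset G.E, G.IsCircuitSet k C ∧ a ∈ C ∧ b ∈ C

end Multigraph

namespace Multigraph

variable {G : Multigraph}

/-- weight of edge e at vertex v -/
noncomputable def wt (G : Multigraph) (e : G.E) (v : G.V) : ℕ :=
  if G.ends e = Sym2.mk v v then 2 else if v ∈ G.ends e then 1 else 0

lemma degIn_eq_sum (X : Finset G.E) (v : G.V) : G.degIn X v = ∑ e ∈ X, G.wt e v := rfl

lemma mem_supp_iff {X : Finset G.E} {v : G.V} :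
    v ∈ G.supp X ↔ ∃ e ∈ X, v ∈ G.ends e := by
  simp [supp]

lemma supp_mono {X Y : Finset G.E} (h : X ⊆ Y) : G.supp X ⊆ G.supp Y := by
  intro v hv
  rw [mem_supp_iff] at hv ⊢
  obtain ⟨e, he, hve⟩ := hv
  exact ⟨e, h he, hve⟩

lemma wt_pos_iff {e : G.E} {v : G.V} : 1 ≤ G.wt e v ↔ v ∈ G.ends e := by
  unfold wt
  split_ifs with h1 h2
  · have : v ∈ G.ends e := by rw [h1]; exact Sym2.mem_mk_left v v
    simp [this]
  · simp [h2]
  · simp [h2]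

lemma supp_nonempty {X : Finset G.E} (hX : X.Nonempty) : (G.supp X).Nonempty := by
  obtain ⟨e, he⟩ := hX
  induction' h : G.ends e using Sym2.ind with a b
  exact ⟨a, mem_supp_iff.2 ⟨e, he, by rw [h]; exact Sym2.mem_mk_left a b⟩⟩

end Multigraph

namespace Multigraph
variable {G : Multigraph}

lemma ends_eq (e : G.E) : ∃ a b : G.V, G.ends e = Sym2.mk a b := by
  induction' h : G.ends e using Sym2.ind with a b
  exact ⟨a, b, rfl⟩

lemma wt_loop {e : G.E} {a : G.V} (hab : G.ends e = Sym2.mk a a) (v : G.V) :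
    G.wt e v = if v = a then 2 else 0 := by
  unfold wt
  rw [hab]
  by_cases hva : v = a
  · subst hva; simp
  · have h1 : ¬ (Sym2.mk a a = Sym2.mk v v) := by
      rw [Sym2.eq_iff]; rintro (⟨h, -⟩ | ⟨h, -⟩) <;> exact hva h.symm
    have h2 : v ∉ Sym2.mk a a := by rw [Sym2.mem_iff]; push_neg; exact ⟨hva, hva⟩
    simp [h1, h2, hva]

lemma wt_nonloop {e : G.E} {a b : G.V} (hne : a ≠ b) (hab : G.ends e = Sym2.mk a b) (v : G.V) :
    G.wt e v = (if v = a then 1 else 0) + (if v = b then 1 else 0) := by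
  unfold wt
  rw [hab]
  have h1 : ¬ (Sym2.mk a b = Sym2.mk v v) := by
    rw [Sym2.eq_iff]; rintro (⟨h1, h2⟩ | ⟨h1, h2⟩) <;> exact hne (h1.trans h2.symm)
  rw [if_neg h1]
  simp only [Sym2.mem_iff]
  by_cases hva : v = a <;> by_cases hvb : v = b
  · exact absurd (hva.symm.trans hvb) hne
  · simp [hva, hvb]; exact hne
  · simp [hva, hvb]; exact fun h => hne h.symm
  · simp [hva, hvb]

lemma wtsum_le_two (e : G.E) (S : Finset G.V) : ∑ v ∈ S, G.wt e v ≤ 2 := by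
  obtain ⟨a, b, hab⟩ := ends_eq e
  by_cases hne : a = b
  · subst hne
    rw [Finset.sum_congr rfl (fun v _ => wt_loop hab v), Finset.sum_ite_eq' S a (fun _ => 2)]
    split <;> omega
  · rw [Finset.sum_congr rfl (fun v _ => wt_nonloop hne hab v), Finset.sum_add_distrib,
      Finset.sum_ite_eq' S a (fun _ => 1), Finset.sum_ite_eq' S b (fun _ => 1)]
    split <;> split <;> omega

lemma wtsum_eq_two {e : G.E} {S : Finset G.V} (h : ∀ v ∈ G.ends e, v ∈ S) :
    ∑ v ∈ S, G.wt e v = 2 := by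
  obtain ⟨a, b, hab⟩ := ends_eq e
  have ha : a ∈ S := h a (by rw [hab]; exact Sym2.mem_mk_left a b)
  have hb : b ∈ S := h b (by rw [hab]; exact Sym2.mem_mk_right a b)
  by_cases hne : a = b
  · subst hne
    rw [Finset.sum_congr rfl (fun v _ => wt_loop hab v), Finset.sum_ite_eq' S a (fun _ => 2),
      if_pos ha]
  · rw [Finset.sum_congr rfl (fun v _ => wt_nonloop hne hab v), Finset.sum_add_distrib,
      Finset.sum_ite_eq' S a (fun _ => 1), Finset.sum_ite_eq' S b (fun _ => 1),
      if_pos ha, if_pos hb]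

lemma wtsum_le_one {e : G.E} {S : Finset G.V} (h : ∃ v ∈ G.ends e, v ∉ S) :
    ∑ v ∈ S, G.wt e v ≤ 1 := by
  obtain ⟨a, b, hab⟩ := ends_eq e
  obtain ⟨w, hw, hwS⟩ := h
  rw [hab, Sym2.mem_iff] at hw
  by_cases hne : a = b
  · subst hne
    have : a ∉ S := by rcases hw with h | h <;> (rw [h] at hwS; exact hwS)
    rw [Finset.sum_congr rfl (fun v _ => wt_loop hab v), Finset.sum_ite_eq' S a (fun _ => 2),
      if_neg this]
    omega
  · rw [Finset.sum_congr rfl (fun v _ => wt_nonloop hne hab v), Finset.sum_add_distrib,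
      Finset.sum_ite_eq' S a (fun _ => 1), Finset.sum_ite_eq' S b (fun _ => 1)]
    rcases hw with h | h <;> rw [h] at hwS
    · rw [if_neg hwS]; split <;> omega
    · rw [if_neg hwS]; split <;> omega

end Multigraph

namespace Multigraph
variable {G : Multigraph}

lemma degIn_pos_of_mem_supp {X : Finset G.E} {v : G.V} (h : v ∈ G.supp X) :
    1 ≤ G.degIn X v := by
  obtain ⟨e, he, hve⟩ := mem_supp_iff.1 h
  rw [degIn_eq_sum]
  calc 1 ≤ G.wt e v := wt_pos_iff.2 hve
  _ ≤ _ := Finset.single_le_sum (f := fun f => G.wt f v) (fun f _ => Nat.zero_le _) he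

lemma degIn_zero_of_not_mem_supp {X : Finset G.E} {v : G.V} (h : v ∉ G.supp X) :
    G.degIn X v = 0 := by
  rw [degIn_eq_sum]
  refine Finset.sum_eq_zero (fun e he => ?_)
  by_contra hne
  exact h (mem_supp_iff.2 ⟨e, he, wt_pos_iff.1 (Nat.one_le_iff_ne_zero.2 hne)⟩)

lemma degIn_sdiff_add {D X : Finset G.E} (h : D ⊆ X) (v : G.V) :
    G.degIn (X \ D) v + G.degIn D v = G.degIn X v :=
  Finset.sum_sdiff h

lemma two_le_degIn_of_two_edges {X : Finset G.E} {e f : G.E} {v : G.V}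
    (he : e ∈ X) (hf : f ∈ X) (hef : e ≠ f) (hve : v ∈ G.ends e) (hvf : v ∈ G.ends f) :
    2 ≤ G.degIn X v := by
  rw [degIn_eq_sum]
  have hsub : ({e, f} : Finset G.E) ⊆ X := by
    intro x hx; rcases Finset.mem_insert.1 hx with h | h
    · exact h ▸ he
    · exact (Finset.mem_singleton.1 h) ▸ hf
  calc (2:ℕ) ≤ G.wt e v + G.wt f v := by
        have h1 := wt_pos_iff.2 hve; have h2 := wt_pos_iff.2 hvf; omega
  _ = ∑ x ∈ ({e, f} : Finset G.E), G.wt x v := (Finset.sum_pair (f := fun x => G.wt x v) hef).symm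
  _ ≤ _ := Finset.sum_le_sum_of_subset hsub

lemma handshake (X : Finset G.E) : ∑ v ∈ G.supp X, G.degIn X v = 2 * X.card := by
  simp only [degIn_eq_sum]
  rw [Finset.sum_comm]
  rw [Finset.sum_congr rfl (fun e he => wtsum_eq_two (fun v hv => mem_supp_iff.2 ⟨e, he, hv⟩))]
  simp [Nat.mul_comm]

lemma delta_sub_eq {D C : Finset G.E} (h : D ⊆ C) :
    G.delta D = G.delta C - ((C \ D).card : ℤ) + ((G.supp C \ G.supp D).card : ℤ) := by
  unfold delta
  have h1 : (C \ D).card = C.card - D.card := Finset.card_sdiff_of_subset h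
  have h2 : (G.supp C \ G.supp D).card = (G.supp C).card - (G.supp D).card :=
    Finset.card_sdiff_of_subset (supp_mono h)
  have h3 : D.card ≤ C.card := Finset.card_le_card h
  have h4 : (G.supp D).card ≤ (G.supp C).card := Finset.card_le_card (supp_mono h)
  rw [h1, h2]
  push_cast [h3, h4]
  ring

lemma nonempty_of_delta_pos {C : Finset G.E} (h : 0 < G.delta C) : C.Nonempty := by
  rw [← Finset.card_pos]
  unfold delta at h
  omega

lemma delta_empty : G.delta (∅ : Finset G.E) = 0 := by
  unfold delta supp; simp

lemma delta_erase_ge {X : Finset G.E} {e : G.E} (he : e ∈ X) :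
    G.delta X - 1 ≤ G.delta (X.erase e) := by
  unfold delta
  have h1 : (X.erase e).card = X.card - 1 := Finset.card_erase_of_mem he
  have h2 : (G.supp (X.erase e)).card ≤ (G.supp X).card :=
    Finset.card_le_card (supp_mono (Finset.erase_subset e X))
  have h3 : 1 ≤ X.card := Finset.card_pos.2 ⟨e, he⟩
  rw [h1]
  push_cast [h3]
  omega

/-- Key counting lemma, part 1. -/
lemma count_le {D C : Finset G.E} (hDC : D ⊆ C)
    (hdeg : ∀ v ∈ G.supp C, v ∉ G.supp D → 2 ≤ G.degIn C v) :
    (G.supp C \ G.supp D).card ≤ (C \ D).card := by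
  have key : ∀ v ∈ G.supp C \ G.supp D, 2 ≤ G.degIn (C \ D) v := by
    intro v hv
    obtain ⟨hvC, hvD⟩ := Finset.mem_sdiff.1 hv
    have := degIn_sdiff_add hDC (G := G) v
    have hz : G.degIn D v = 0 := degIn_zero_of_not_mem_supp hvD
    have := hdeg v hvC hvD
    omega
  have h1 : 2 * (G.supp C \ G.supp D).card ≤ ∑ v ∈ G.supp C \ G.supp D, G.degIn (C \ D) v := by
    calc 2 * (G.supp C \ G.supp D).card = ∑ _v ∈ G.supp C \ G.supp D, 2 := by
          rw [Finset.sum_const]; ring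
    _ ≤ _ := Finset.sum_le_sum key
  have h2 : ∑ v ∈ G.supp C \ G.supp D, G.degIn (C \ D) v ≤ 2 * (C \ D).card := by
    simp only [degIn_eq_sum]
    rw [Finset.sum_comm]
    calc ∑ e ∈ C \ D, ∑ v ∈ G.supp C \ G.supp D, G.wt e v
        ≤ ∑ _e ∈ C \ D, 2 := Finset.sum_le_sum (fun e _ => wtsum_le_two e _)
    _ = 2 * (C \ D).card := by rw [Finset.sum_const]; ring
  omega

/-- Key counting lemma, part 2: strict version. -/
lemma count_lt {D C : Finset G.E} (hDC : D ⊆ C)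
    (hdeg : ∀ v ∈ G.supp C, v ∉ G.supp D → 2 ≤ G.degIn C v)
    (hcross : ∃ e ∈ C \ D, ∃ v ∈ G.ends e, v ∈ G.supp D) :
    (G.supp C \ G.supp D).card + 1 ≤ (C \ D).card := by
  obtain ⟨e₀, he₀, v₀, hv₀, hv₀D⟩ := hcross
  have key : ∀ v ∈ G.supp C \ G.supp D, 2 ≤ G.degIn (C \ D) v := by
    intro v hv
    obtain ⟨hvC, hvD⟩ := Finset.mem_sdiff.1 hv
    have := degIn_sdiff_add hDC (G := G) v
    have hz : G.degIn D v = 0 := degIn_zero_of_not_mem_supp hvD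
    have := hdeg v hvC hvD
    omega
  have h1 : 2 * (G.supp C \ G.supp D).card ≤ ∑ v ∈ G.supp C \ G.supp D, G.degIn (C \ D) v := by
    calc 2 * (G.supp C \ G.supp D).card = ∑ _v ∈ G.supp C \ G.supp D, 2 := by
          rw [Finset.sum_const]; ring
    _ ≤ _ := Finset.sum_le_sum key
  have h2 : ∑ v ∈ G.supp C \ G.supp D, G.degIn (C \ D) v ≤ 2 * (C \ D).card - 1 := by
    simp only [degIn_eq_sum]
    rw [Finset.sum_comm]
    have hrw : ∑ e ∈ C \ D, ∑ v ∈ G.supp C \ G.supp D, G.wt e v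
        = (∑ v ∈ G.supp C \ G.supp D, G.wt e₀ v)
          + ∑ e ∈ (C \ D).erase e₀, ∑ v ∈ G.supp C \ G.supp D, G.wt e v :=
      (Finset.add_sum_erase _ _ he₀).symm
    have hb0 : ∑ v ∈ G.supp C \ G.supp D, G.wt e₀ v ≤ 1 :=
      wtsum_le_one ⟨v₀, hv₀, fun hmem => (Finset.mem_sdiff.1 hmem).2 hv₀D⟩
    have hb1 : ∑ e ∈ (C \ D).erase e₀, ∑ v ∈ G.supp C \ G.supp D, G.wt e v
        ≤ 2 * ((C \ D).card - 1) := by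
      calc ∑ e ∈ (C \ D).erase e₀, ∑ v ∈ G.supp C \ G.supp D, G.wt e v
          ≤ ∑ _e ∈ (C \ D).erase e₀, 2 := Finset.sum_le_sum (fun e _ => wtsum_le_two e _)
      _ = 2 * ((C \ D).erase e₀).card := by rw [Finset.sum_const]; ring
      _ = 2 * ((C \ D).card - 1) := by rw [Finset.card_erase_of_mem he₀]
    have hcard : 1 ≤ (C \ D).card := Finset.card_pos.2 ⟨e₀, he₀⟩
    omega
  have hcard : 1 ≤ (C \ D).card := Finset.card_pos.2 ⟨e₀, he₀⟩
  omega

end Multigraph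

namespace Multigraph
variable {G : Multigraph}

lemma adjIn_symm {X : Finset G.E} : Symmetric (G.adjIn X) := by
  rintro u v ⟨e, he, hends⟩
  exact ⟨e, he, by rw [hends, Sym2.eq_swap]⟩

lemma reachIn_symm {X : Finset G.E} {u v : G.V} (h : G.reachIn X u v) : G.reachIn X v u :=
  by
  induction h with
  | refl => exact Relation.ReflTransGen.refl
  | tail _ hadj ih => exact Relation.ReflTransGen.head (adjIn_symm hadj) ih

lemma reachIn_mono {X Y : Finset G.E} (hXY : X ⊆ Y) {u v : G.V} (h : G.reachIn X u v) :
    G.reachIn Y u v :=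
  Relation.ReflTransGen.mono (p := G.adjIn Y) (fun _ _ ⟨e, he, hh⟩ => ⟨e, hXY he, hh⟩) _ _ h

lemma mem_compEdges_iff {X : Finset G.E} {v : G.V} {f : G.E} :
    f ∈ G.compEdges X v ↔ f ∈ X ∧ ∃ u ∈ G.ends f, G.reachIn X v u := by
  simp [compEdges]

lemma compEdges_subset (X : Finset G.E) (v : G.V) : G.compEdges X v ⊆ X :=
  Finset.filter_subset _ _

lemma reach_of_ends {X : Finset G.E} {f : G.E} {u w : G.V}
    (hf : f ∈ X) (hu : u ∈ G.ends f) (hw : w ∈ G.ends f) : G.reachIn X u w := by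
  by_cases huw : u = w
  · exact huw ▸ Relation.ReflTransGen.refl
  · obtain ⟨a, b, hab⟩ := ends_eq f
    rw [hab, Sym2.mem_iff] at hu hw
    refine Relation.ReflTransGen.single ⟨f, hf, ?_⟩
    rcases hu with h1 | h1 <;> rcases hw with h2 | h2
    · exact absurd (h1.trans h2.symm) huw
    · rw [hab, h1, h2]
    · rw [hab, h1, h2, Sym2.eq_swap]
    · exact absurd (h1.trans h2.symm) huw

lemma reach_of_mem_supp_comp {X : Finset G.E} {v u : G.V}
    (h : u ∈ G.supp (G.compEdges X v)) : G.reachIn X v u := by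
  obtain ⟨f, hf, hu⟩ := mem_supp_iff.1 h
  obtain ⟨hfX, w, hw, hreach⟩ := mem_compEdges_iff.1 hf
  exact hreach.trans (reach_of_ends hfX hw hu)

lemma mem_compEdges_of_touch {X : Finset G.E} {v u : G.V} {f : G.E}
    (hf : f ∈ X) (hu : u ∈ G.ends f) (hreach : G.reachIn X v u) : f ∈ G.compEdges X v :=
  mem_compEdges_iff.2 ⟨hf, u, hu, hreach⟩

lemma comp_closed {X : Finset G.E} {v u : G.V} {f : G.E}
    (hf : f ∈ X) (hu : u ∈ G.ends f) (hus : u ∈ G.supp (G.compEdges X v)) :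
    f ∈ G.compEdges X v :=
  mem_compEdges_of_touch hf hu (reach_of_mem_supp_comp hus)

lemma supp_comp_sdiff (X : Finset G.E) (v : G.V) :
    G.supp (X \ G.compEdges X v) = G.supp X \ G.supp (G.compEdges X v) := by
  ext u
  simp only [Finset.mem_sdiff]
  constructor
  · intro hu
    obtain ⟨e, he, hue⟩ := mem_supp_iff.1 hu
    obtain ⟨heX, heA⟩ := Finset.mem_sdiff.1 he
    refine ⟨mem_supp_iff.2 ⟨e, heX, hue⟩, fun hsuppA => heA (comp_closed heX hue hsuppA)⟩
  · rintro ⟨huX, huA⟩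
    obtain ⟨e, he, hue⟩ := mem_supp_iff.1 huX
    have heA : e ∉ G.compEdges X v := fun hmem => huA (mem_supp_iff.2 ⟨e, hmem, hue⟩)
    exact mem_supp_iff.2 ⟨e, Finset.mem_sdiff.2 ⟨he, heA⟩, hue⟩

lemma delta_comp_add (X : Finset G.E) (v : G.V) :
    G.delta X = G.delta (X \ G.compEdges X v) + G.delta (G.compEdges X v) := by
  unfold delta
  have h1 : (X \ G.compEdges X v).card = X.card - (G.compEdges X v).card :=
    Finset.card_sdiff_of_subset (compEdges_subset X v)
  have h2 : (G.supp (X \ G.compEdges X v)).card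
      = (G.supp X).card - (G.supp (G.compEdges X v)).card := by
    rw [supp_comp_sdiff]
    exact Finset.card_sdiff_of_subset (supp_mono (compEdges_subset X v))
  have h3 := Finset.card_le_card (compEdges_subset X v)
  have h4 := Finset.card_le_card (supp_mono (compEdges_subset X v) (G := G))
  rw [h1, h2]
  push_cast [h3, h4]
  ring

lemma reach_in_comp {X : Finset G.E} {v u : G.V} (h : G.reachIn X v u) :
    G.reachIn (G.compEdges X v) v u := by
  induction h with
  | refl => exact Relation.ReflTransGen.refl
  | tail hvw hadj ih =>
      rename_i w u'
      obtain ⟨f, hfX, hends⟩ := hadj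
      have hw : w ∈ G.ends f := by rw [hends]; exact Sym2.mem_mk_left _ _
      have hfA : f ∈ G.compEdges X v := mem_compEdges_of_touch hfX hw hvw
      exact ih.tail ⟨f, hfA, hends⟩

lemma degIn_comp {X : Finset G.E} {v u : G.V} (h : u ∈ G.supp (G.compEdges X v)) :
    G.degIn (G.compEdges X v) u = G.degIn X u := by
  have hadd := degIn_sdiff_add (compEdges_subset X v) (G := G) u
  have h0 : G.degIn (X \ G.compEdges X v) u = 0 := by
    apply degIn_zero_of_not_mem_supp
    rw [supp_comp_sdiff]
    exact fun hmem => (Finset.mem_sdiff.1 hmem).2 h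
  omega

lemma mem_supp_comp_self {X : Finset G.E} {v : G.V} (h : v ∈ G.supp X) :
    v ∈ G.supp (G.compEdges X v) := by
  obtain ⟨e, he, hv⟩ := mem_supp_iff.1 h
  exact mem_supp_iff.2 ⟨e, mem_compEdges_of_touch he hv Relation.ReflTransGen.refl, hv⟩

lemma conn_comp {X : Finset G.E} {v : G.V} (h : v ∈ G.supp X) :
    G.ConnSet (G.compEdges X v) := by
  constructor
  · obtain ⟨e, he, hv⟩ := mem_supp_iff.1 h
    exact ⟨e, mem_compEdges_of_touch he hv Relation.ReflTransGen.refl⟩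
  · intro u hu u' hu'
    have h1 : G.reachIn (G.compEdges X v) v u := reach_in_comp (reach_of_mem_supp_comp hu)
    have h2 : G.reachIn (G.compEdges X v) v u' := reach_in_comp (reach_of_mem_supp_comp hu')
    exact (reachIn_symm h1).trans h2

lemma reach_avoid {X : Finset G.E} {v₀ v u : G.V}
    (hv : v ∉ G.supp (G.compEdges X v₀)) (h : G.reachIn X v u) :
    G.reachIn (X \ G.compEdges X v₀) v u ∧ u ∉ G.supp (G.compEdges X v₀) := by
  induction h with
  | refl => exact ⟨Relation.ReflTransGen.refl, hv⟩
  | tail hvw hadj ih =>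
      rename_i w u'
      obtain ⟨ih1, ih2⟩ := ih
      obtain ⟨f, hfX, hends⟩ := hadj
      have hwf : w ∈ G.ends f := by rw [hends]; exact Sym2.mem_mk_left _ _
      have huf : u' ∈ G.ends f := by rw [hends]; exact Sym2.mem_mk_right _ _
      have hfA : f ∉ G.compEdges X v₀ := fun hmem => ih2 (mem_supp_iff.2 ⟨f, hmem, hwf⟩)
      have hu' : u' ∉ G.supp (G.compEdges X v₀) :=
        fun hmem => hfA (comp_closed hfX huf hmem)
      exact ⟨ih1.tail ⟨f, Finset.mem_sdiff.2 ⟨hfX, hfA⟩, hends⟩, hu'⟩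

lemma compEdges_sdiff_eq {X : Finset G.E} {v₀ v : G.V}
    (hv : v ∈ G.supp (X \ G.compEdges X v₀)) :
    G.compEdges (X \ G.compEdges X v₀) v = G.compEdges X v := by
  have hvA : v ∉ G.supp (G.compEdges X v₀) := by
    rw [supp_comp_sdiff] at hv
    exact (Finset.mem_sdiff.1 hv).2
  ext f
  simp only [mem_compEdges_iff]
  constructor
  · rintro ⟨hfX', u, hu, hreach⟩
    exact ⟨(Finset.mem_sdiff.1 hfX').1, u, hu,
      reachIn_mono (Finset.sdiff_subset) hreach⟩
  · rintro ⟨hfX, u, hu, hreach⟩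
    obtain ⟨hr', huA⟩ := reach_avoid hvA hreach
    have hfA : f ∉ G.compEdges X v₀ := fun hmem => huA (mem_supp_iff.2 ⟨f, hmem, hu⟩)
    exact ⟨Finset.mem_sdiff.2 ⟨hfX, hfA⟩, u, hu, hr'⟩

end Multigraph

namespace Multigraph
variable {G : Multigraph}

/-- Proper nonempty subsets of a connected min-degree-2 edge set have strictly smaller delta. -/
lemma delta_lt_of_conn {A D : Finset G.E} (hconn : G.ConnSet A)
    (hdeg : ∀ v ∈ G.supp A, 2 ≤ G.degIn A v)
    (hDA : D ⊂ A) (hD : D.Nonempty) :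
    G.delta D ≤ G.delta A - 1 := by
  by_cases hcross : ∃ e ∈ A \ D, ∃ v ∈ G.ends e, v ∈ G.supp D
  · have hcount := count_lt hDA.subset (fun v hv _ => hdeg v hv) hcross
    have heq := delta_sub_eq hDA.subset (G := G)
    have h1 : (G.supp A \ G.supp D).card + 1 ≤ (A \ D).card := hcount
    omega
  · exfalso
    push_neg at hcross
    obtain ⟨e₀, he₀A, he₀D⟩ := Finset.exists_of_ssubset hDA
    have he₀ : e₀ ∈ A \ D := Finset.mem_sdiff.2 ⟨he₀A, he₀D⟩
    obtain ⟨a, b, hab⟩ := ends_eq e₀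
    have hax : a ∈ G.ends e₀ := by rw [hab]; exact Sym2.mem_mk_left a b
    have haD : a ∉ G.supp D := hcross e₀ he₀ a hax
    have haA : a ∈ G.supp A := mem_supp_iff.2 ⟨e₀, he₀A, hax⟩
    obtain ⟨d, hd⟩ := supp_nonempty hD
    have hdA : d ∈ G.supp A := supp_mono hDA.subset hd
    have hreach : G.reachIn A d a := hconn.2 d hdA a haA
    have hclaim : ∀ u, G.reachIn A d u → u ∈ G.supp D := by
      intro u h
      induction h with
      | refl => exact hd
      | tail hdw hadj ih =>
          rename_i w u'
          obtain ⟨f, hfA, hends⟩ := hadj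
          have hwf : w ∈ G.ends f := by rw [hends]; exact Sym2.mem_mk_left _ _
          have huf : u' ∈ G.ends f := by rw [hends]; exact Sym2.mem_mk_right _ _
          by_cases hfD : f ∈ D
          · exact mem_supp_iff.2 ⟨f, hfD, huf⟩
          · exact absurd ih (hcross f (Finset.mem_sdiff.2 ⟨hfA, hfD⟩) w hwf)
    exact haD (hclaim a hreach)

lemma delta_cycle {Y : Finset G.E} (h : G.IsCycleSet Y) : G.delta Y = 0 := by
  obtain ⟨⟨hne, _⟩, hdeg⟩ := h
  have h1 := handshake Y (G := G)
  have h2 : ∑ v ∈ G.supp Y, G.degIn Y v = 2 * (G.supp Y).card := by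
    rw [Finset.sum_congr rfl hdeg, Finset.sum_const]; ring
  unfold delta
  omega

lemma wt_le_degIn {X : Finset G.E} {e : G.E} {v : G.V} (he : e ∈ X) :
    G.wt e v ≤ G.degIn X v :=
  Finset.single_le_sum (f := fun f => G.wt f v) (fun f _ => Nat.zero_le _) he

/-- Every nonempty edge set with `delta ≥ 0` contains a cycle. -/
lemma exists_cycle {X : Finset G.E} (hne : X.Nonempty) (hd : 0 ≤ G.delta X) :
    ∃ Y ⊆ X, G.IsCycleSet Y := by
  classical
  set S : Finset (Finset G.E) :=
    X.powerset.filter (fun Y => Y.Nonempty ∧ 0 ≤ G.delta Y) with hS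
  have hXS : X ∈ S := by
    rw [hS]; exact Finset.mem_filter.2 ⟨Finset.mem_powerset.2 subset_rfl, hne, hd⟩
  obtain ⟨Y, hYS, hmin⟩ := S.exists_min_image Finset.card ⟨X, hXS⟩
  rw [hS, Finset.mem_filter, Finset.mem_powerset] at hYS
  obtain ⟨hYX, hYne, hYd⟩ := hYS
  have hmin' : ∀ Z, Z ⊆ X → Z.Nonempty → 0 ≤ G.delta Z → Y.card ≤ Z.card := by
    intro Z h1 h2 h3
    exact hmin Z (by rw [hS]; exact Finset.mem_filter.2 ⟨Finset.mem_powerset.2 h1, h2, h3⟩)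
  have hsne : (G.supp Y).Nonempty := supp_nonempty hYne
  -- delta Y = 0
  have hd0 : G.delta Y = 0 := by
    by_contra hne0
    have h1 : 1 ≤ G.delta Y := by omega
    have hcard : 2 ≤ Y.card := by
      have := Finset.card_pos.2 hsne
      unfold delta at h1
      omega
    obtain ⟨e, he⟩ := hYne
    have h2 : 0 ≤ G.delta (Y.erase e) := by
      have := delta_erase_ge he (G := G)
      omega
    have h3 : (Y.erase e).Nonempty := by
      rw [← Finset.card_pos, Finset.card_erase_of_mem he]; omega
    have h4 := hmin' (Y.erase e) ((Finset.erase_subset e Y).trans hYX) h3 h2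
    rw [Finset.card_erase_of_mem he] at h4
    omega
  -- min degree 2
  have hdeg2 : ∀ v ∈ G.supp Y, 2 ≤ G.degIn Y v := by
    intro v hv
    by_contra hlt
    have hd1 : G.degIn Y v = 1 := by
      have := degIn_pos_of_mem_supp hv (G := G)
      omega
    obtain ⟨e, he, hve⟩ := mem_supp_iff.1 hv
    -- every other edge misses v
    have huniq : ∀ f ∈ Y.erase e, v ∉ G.ends f := by
      intro f hf hvf
      have hfe : f ≠ e := Finset.ne_of_mem_erase hf
      have := two_le_degIn_of_two_edges (Finset.mem_of_mem_erase hf) he hfe hvf hve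
      omega
    have hvout : v ∉ G.supp (Y.erase e) := by
      intro hmem
      obtain ⟨f, hf, hvf⟩ := mem_supp_iff.1 hmem
      exact huniq f hf hvf
    have hsupp_sub : G.supp (Y.erase e) ⊆ (G.supp Y).erase v := by
      intro u hu
      exact Finset.mem_erase.2 ⟨fun huv => hvout (huv ▸ hu),
        supp_mono (Finset.erase_subset e Y) hu⟩
    have hd2 : 0 ≤ G.delta (Y.erase e) := by
      have hc1 : (Y.erase e).card = Y.card - 1 := Finset.card_erase_of_mem he
      have hc2 : (G.supp (Y.erase e)).card ≤ (G.supp Y).card - 1 := by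
        calc (G.supp (Y.erase e)).card ≤ ((G.supp Y).erase v).card :=
              Finset.card_le_card hsupp_sub
        _ = (G.supp Y).card - 1 := Finset.card_erase_of_mem hv
      have hcY : 1 ≤ Y.card := Finset.card_pos.2 hYne
      have hcS : 1 ≤ (G.supp Y).card := Finset.card_pos.2 hsne
      unfold delta at hd0 ⊢
      omega
    have h3 : (Y.erase e).Nonempty := by
      rw [← Finset.card_pos, Finset.card_erase_of_mem he]
      by_contra hzero
      -- Y = {e}
      have hcY : Y.card = 1 := by
        have := Finset.card_pos.2 hYne
        omega
      obtain ⟨a, b, hab⟩ := ends_eq e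
      by_cases haeqb : a = b
      · -- loop: degree 2
        subst haeqb
        have hva : v = a := by
          rw [hab, Sym2.mem_iff] at hve
          rcases hve with h | h <;> exact h
        have : G.wt e v = 2 := by
          unfold wt
          rw [hab, hva, if_pos rfl]
        have := wt_le_degIn he (v := v) (G := G)
        omega
      · -- non-loop: supp has 2 elements, delta {e} = -1 ≠ 0
        have hYe : Y = {e} := Finset.eq_singleton_iff_unique_mem.2
          ⟨he, fun f hf => by
            by_contra hfe
            have : Y.card ≥ 2 := by
              have : ({f, e} : Finset G.E) ⊆ Y := by
                intro x hx
                rcases Finset.mem_insert.1 hx with h | h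
                · exact h ▸ hf
                · exact (Finset.mem_singleton.1 h) ▸ he
              calc 2 = ({f, e} : Finset G.E).card := (Finset.card_pair hfe).symm
              _ ≤ Y.card := Finset.card_le_card this
            omega⟩
        have hsupp : G.supp Y = {a, b} := by
          ext u
          rw [mem_supp_iff]
          constructor
          · rintro ⟨f, hf, huf⟩
            rw [hYe, Finset.mem_singleton] at hf
            subst hf
            rw [hab, Sym2.mem_iff] at huf
            rcases huf with h | h <;> simp [h]
          · intro hu
            refine ⟨e, he, ?_⟩
            rw [hab, Sym2.mem_iff]
            rcases Finset.mem_insert.1 hu with h | h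
            · exact Or.inl h
            · exact Or.inr (Finset.mem_singleton.1 h)
        have : (G.supp Y).card = 2 := by rw [hsupp]; exact Finset.card_pair haeqb
        unfold delta at hd0
        omega
    have h4 := hmin' (Y.erase e) ((Finset.erase_subset e Y).trans hYX) h3 hd2
    rw [Finset.card_erase_of_mem he] at h4
    have : 1 ≤ Y.card := Finset.card_pos.2 hYne
    omega
  -- degrees exactly 2
  have hdeg_eq : ∀ v ∈ G.supp Y, G.degIn Y v = 2 := by
    intro v hv
    by_contra hne2
    have h3 : 3 ≤ G.degIn Y v := by
      have := hdeg2 v hv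
      omega
    have hsum := handshake Y (G := G)
    have hsplit : ∑ u ∈ G.supp Y, G.degIn Y u
        = G.degIn Y v + ∑ u ∈ (G.supp Y).erase v, G.degIn Y u :=
      (Finset.add_sum_erase _ _ hv).symm
    have hrest : 2 * ((G.supp Y).erase v).card ≤ ∑ u ∈ (G.supp Y).erase v, G.degIn Y u := by
      calc 2 * ((G.supp Y).erase v).card = ∑ _u ∈ (G.supp Y).erase v, 2 := by
            rw [Finset.sum_const]; ring
      _ ≤ _ := Finset.sum_le_sum (fun u hu =>
          hdeg2 u (Finset.mem_of_mem_erase hu))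
    have hce : ((G.supp Y).erase v).card = (G.supp Y).card - 1 := Finset.card_erase_of_mem hv
    have hcS : 1 ≤ (G.supp Y).card := Finset.card_pos.2 hsne
    unfold delta at hd0
    omega
  -- connected
  obtain ⟨v₀, hv₀⟩ := hsne
  have hconnA := conn_comp hv₀ (G := G)
  have hAY : G.compEdges Y v₀ = Y := by
    by_contra hne'
    have hss : G.compEdges Y v₀ ⊂ Y := (compEdges_subset Y v₀).ssubset_of_ne hne'
    have hAne : (G.compEdges Y v₀).Nonempty := hconnA.1
    have hdA : G.delta (G.compEdges Y v₀) = 0 := by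
      have hdegA : ∀ u ∈ G.supp (G.compEdges Y v₀), G.degIn (G.compEdges Y v₀) u = 2 := by
        intro u hu
        rw [degIn_comp hu]
        exact hdeg_eq u (supp_mono (compEdges_subset Y v₀) hu)
      have h1 := handshake (G.compEdges Y v₀) (G := G)
      have h2 : ∑ u ∈ G.supp (G.compEdges Y v₀), G.degIn (G.compEdges Y v₀) u
          = 2 * (G.supp (G.compEdges Y v₀)).card := by
        rw [Finset.sum_congr rfl hdegA, Finset.sum_const]; ring
      unfold delta
      omega
    have h4 := hmin' (G.compEdges Y v₀) ((compEdges_subset Y v₀).trans hYX) hAne (le_of_eq hdA.symm)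
    have := Finset.card_lt_card hss
    omega
  refine ⟨Y, hYX, ?_, hdeg_eq⟩
  rw [← hAY]
  exact hconnA

end Multigraph

namespace Multigraph
variable {G : Multigraph}

lemma chain {k : ℕ} (hk : 1 ≤ k) (D : Finset G.E) :
    (k:ℤ) ≤ G.delta D → ∃ D' , D' ⊆ D ∧ D'.Nonempty ∧ G.delta D' = (k:ℤ) := by
  induction D using Finset.strongInduction with
  | _ D ih =>
    intro h
    by_cases heq : G.delta D = (k:ℤ)
    · exact ⟨D, subset_rfl, nonempty_of_delta_pos (by omega), heq⟩
    · have hgt : (k:ℤ) + 1 ≤ G.delta D := by omega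
      obtain ⟨e, he⟩ := nonempty_of_delta_pos (show 0 < G.delta D by omega)
      have h1 : (k:ℤ) ≤ G.delta (D.erase e) := by
        have := delta_erase_ge he (G := G)
        omega
      obtain ⟨D', h2, h3, h4⟩ := ih (D.erase e) (Finset.erase_ssubset he) h1
      exact ⟨D', h2.trans (Finset.erase_subset e D), h3, h4⟩

lemma circuit_iff {k : ℕ} (hk : 1 ≤ k) {C : Finset G.E} :
    G.IsCircuitSet k C ↔ (G.delta C = (k:ℤ) ∧ ∀ D ⊂ C, G.delta D < (k:ℤ)) := by
  constructor
  · rintro ⟨⟨hCne, hCd⟩, hmin⟩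
    refine ⟨hCd, fun D hDC => ?_⟩
    by_contra hge
    push_neg at hge
    obtain ⟨D', h1, h2, h3⟩ := chain hk D hge
    exact hmin D' (lt_of_le_of_lt h1 hDC) ⟨h2, h3⟩
  · rintro ⟨hCd, hlt⟩
    refine ⟨⟨nonempty_of_delta_pos (by omega), hCd⟩, fun D hDC ⟨hDne, hDd⟩ => ?_⟩
    have := hlt D hDC
    omega

/-- A connected leafless edge set with `delta ≥ 1` contains two distinct cycles. -/
lemma two_cycles {A : Finset G.E} (hconn : G.ConnSet A)
    (hdeg : ∀ v ∈ G.supp A, 2 ≤ G.degIn A v) (hdA : 1 ≤ G.delta A) :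
    ∃ C₁ C₂ : Finset G.E, C₁ ⊆ A ∧ C₂ ⊆ A ∧ G.IsCycleSet C₁ ∧ G.IsCycleSet C₂ ∧ C₁ ≠ C₂ := by
  obtain ⟨C₁, hC₁A, hC₁⟩ := exists_cycle hconn.1 (by omega)
  obtain ⟨f, hf⟩ := hC₁.1.1
  have hcard : 2 ≤ A.card := by
    have h1 := Finset.card_pos.2 (supp_nonempty hconn.1)
    unfold delta at hdA
    omega
  have hAf_ne : (A.erase f).Nonempty := by
    rw [← Finset.card_pos, Finset.card_erase_of_mem (hC₁A hf)]
    omega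
  have hAf_d : 0 ≤ G.delta (A.erase f) := by
    have := delta_erase_ge (hC₁A hf) (G := G)
    omega
  obtain ⟨C₂, hC₂A, hC₂⟩ := exists_cycle hAf_ne hAf_d
  refine ⟨C₁, C₂, hC₁A, hC₂A.trans (Finset.erase_subset f A), hC₁, hC₂, ?_⟩
  intro heq
  have : f ∈ A.erase f := hC₂A (heq ▸ hf)
  exact (Finset.notMem_erase f A) this

/-- Conversely, two distinct cycles in a connected leafless edge set force `delta ≥ 1`. -/
lemma delta_ge_one_of_two_cycles {A C₁ C₂ : Finset G.E} (hconn : G.ConnSet A)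
    (hdeg : ∀ v ∈ G.supp A, 2 ≤ G.degIn A v)
    (h1 : C₁ ⊆ A) (h2 : C₂ ⊆ A) (hc1 : G.IsCycleSet C₁) (hc2 : G.IsCycleSet C₂)
    (hne : C₁ ≠ C₂) : 1 ≤ G.delta A := by
  by_cases hC1A : C₁ = A
  · have hss : C₂ ⊂ A := h2.ssubset_of_ne (fun h => hne (hC1A.trans h.symm))
    have := delta_lt_of_conn hconn hdeg hss hc2.1.1
    have := delta_cycle hc2 (G := G)
    omega
  · have hss : C₁ ⊂ A := h1.ssubset_of_ne hC1A
    have := delta_lt_of_conn hconn hdeg hss hc1.1.1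
    have := delta_cycle hc1 (G := G)
    omega

/-- Main strict inequality: proper subsets have smaller delta. -/
lemma main_lt (C : Finset G.E) :
    (∀ v ∈ G.supp C, 2 ≤ G.degIn C v) →
    (∀ v ∈ G.supp C, 1 ≤ G.delta (G.compEdges C v)) →
    ∀ D, D ⊂ C → G.delta D < G.delta C := by
  induction C using Finset.strongInduction with
  | _ C ih =>
    intro hleaf hcomp D hDC
    by_cases hcross : ∃ e ∈ C \ D, ∃ v ∈ G.ends e, v ∈ G.supp D
    · have hcount := count_lt hDC.subset (fun v hv _ => hleaf v hv) hcross
      have heq := delta_sub_eq hDC.subset (G := G)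
      omega
    · push_neg at hcross
      obtain ⟨e₀, he₀C, he₀D⟩ := Finset.exists_of_ssubset hDC
      have he₀ : e₀ ∈ C \ D := Finset.mem_sdiff.2 ⟨he₀C, he₀D⟩
      obtain ⟨a, b, hab⟩ := ends_eq e₀
      have hax : a ∈ G.ends e₀ := by rw [hab]; exact Sym2.mem_mk_left a b
      have haC : a ∈ G.supp C := mem_supp_iff.2 ⟨e₀, he₀C, hax⟩
      have haD : a ∉ G.supp D := hcross e₀ he₀ a hax
      have hclaim : ∀ u, G.reachIn C a u → u ∉ G.supp D := by
        intro u h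
        induction h with
        | refl => exact haD
        | tail hdw hadj ihh =>
            rename_i w u'
            obtain ⟨f, hfC, hends⟩ := hadj
            have hwf : w ∈ G.ends f := by rw [hends]; exact Sym2.mem_mk_left _ _
            have huf : u' ∈ G.ends f := by rw [hends]; exact Sym2.mem_mk_right _ _
            have hfD : f ∉ D := fun hfD => ihh (mem_supp_iff.2 ⟨f, hfD, hwf⟩)
            exact hcross f (Finset.mem_sdiff.2 ⟨hfC, hfD⟩) u' huf
      have hDdisj : ∀ f ∈ (G.compEdges C a), f ∉ D := by
        intro f hfA hfD
        obtain ⟨hfC, u, hu, hreach⟩ := mem_compEdges_iff.1 hfA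
        exact hclaim u hreach (mem_supp_iff.2 ⟨f, hfD, hu⟩)
      have hDsub : D ⊆ C \ (G.compEdges C a) := fun f hf =>
        Finset.mem_sdiff.2 ⟨hDC.subset hf, fun hfA => hDdisj f hfA hf⟩
      have he₀A : e₀ ∈ (G.compEdges C a) := mem_compEdges_of_touch he₀C hax Relation.ReflTransGen.refl
      have hC'ss : C \ (G.compEdges C a) ⊂ C := by
        refine Finset.ssubset_iff_of_subset (Finset.sdiff_subset) |>.2 ?_
        exact ⟨e₀, he₀C, fun hmem => (Finset.mem_sdiff.1 hmem).2 he₀A⟩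
      have hdA : 1 ≤ G.delta (G.compEdges C a) := hcomp a haC
      have hdelta := delta_comp_add C a (G := G)
      have hleaf' : ∀ v ∈ G.supp (C \ (G.compEdges C a)), 2 ≤ G.degIn (C \ (G.compEdges C a)) v := by
        intro v hv
        rw [supp_comp_sdiff] at hv
        obtain ⟨hvC, hvA⟩ := Finset.mem_sdiff.1 hv
        have hadd := degIn_sdiff_add (compEdges_subset C a) (G := G) v
        have h0 : G.degIn (G.compEdges C a) v = 0 := degIn_zero_of_not_mem_supp hvA
        have := hleaf v hvC
        omega
      have hcomp' : ∀ v ∈ G.supp (C \ (G.compEdges C a)), 1 ≤ G.delta (G.compEdges (C \ (G.compEdges C a)) v) := by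
        intro v hv
        rw [compEdges_sdiff_eq hv]
        exact hcomp v (supp_mono (Finset.sdiff_subset) hv)
      by_cases hDeq : D = C \ (G.compEdges C a)
      · rw [hDeq]; omega
      · have hss : D ⊂ C \ (G.compEdges C a) := hDsub.ssubset_of_ne hDeq
        have := ih (C \ (G.compEdges C a)) hC'ss hleaf' hcomp' D hss
        omega

lemma circuit_noleaf {k : ℕ} (hk : 1 ≤ k) {C : Finset G.E} (hC : G.IsCircuitSet k C) :
    ∀ v ∈ G.supp C, G.degIn C v ≠ 1 := by
  intro v hv hdeg1
  obtain ⟨e, he, hve⟩ := mem_supp_iff.1 hv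
  have huniq : ∀ f ∈ C.erase e, v ∉ G.ends f := by
    intro f hf hvf
    have hfe : f ≠ e := Finset.ne_of_mem_erase hf
    have := two_le_degIn_of_two_edges (Finset.mem_of_mem_erase hf) he hfe hvf hve
    omega
  have hvout : v ∉ G.supp (C.erase e) := by
    intro hmem
    obtain ⟨f, hf, hvf⟩ := mem_supp_iff.1 hmem
    exact huniq f hf hvf
  have hsupp_sub : G.supp (C.erase e) ⊆ (G.supp C).erase v := fun u hu =>
    Finset.mem_erase.2 ⟨fun huv => hvout (huv ▸ hu), supp_mono (Finset.erase_subset e C) hu⟩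
  have hd : (k:ℤ) ≤ G.delta (C.erase e) := by
    have hc1 : (C.erase e).card = C.card - 1 := Finset.card_erase_of_mem he
    have hc2 : (G.supp (C.erase e)).card ≤ (G.supp C).card - 1 := by
      calc (G.supp (C.erase e)).card ≤ ((G.supp C).erase v).card :=
            Finset.card_le_card hsupp_sub
      _ = (G.supp C).card - 1 := Finset.card_erase_of_mem hv
    have hcY : 1 ≤ C.card := Finset.card_pos.2 ⟨e, he⟩
    have hcS : 1 ≤ (G.supp C).card := Finset.card_pos.2 ⟨v, hv⟩
    have hCd := hC.1.2
    unfold delta at hCd ⊢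
    omega
  obtain ⟨D', h1, h2, h3⟩ := chain hk (C.erase e) hd
  exact hC.2 D' (lt_of_le_of_lt h1 (Finset.erase_ssubset he)) ⟨h2, h3⟩

lemma circuit_comp_delta {k : ℕ} (hk : 1 ≤ k) {C : Finset G.E} (hC : G.IsCircuitSet k C)
    {v : G.V} (hv : v ∈ G.supp C) : 1 ≤ G.delta (G.compEdges C v) := by
  by_contra hlt
  push_neg at hlt
  have hdelta := delta_comp_add C v (G := G)
  have hCd := hC.1.2
  have hd : (k:ℤ) ≤ G.delta (C \ G.compEdges C v) := by omega
  have hA_ne : (G.compEdges C v).Nonempty := (conn_comp hv).1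
  obtain ⟨e, he⟩ := hA_ne
  have hss : C \ G.compEdges C v ⊂ C := by
    refine Finset.ssubset_iff_of_subset (Finset.sdiff_subset) |>.2 ?_
    exact ⟨e, compEdges_subset C v he, fun hmem => (Finset.mem_sdiff.1 hmem).2 he⟩
  obtain ⟨D', h1, h2, h3⟩ := chain hk _ hd
  exact hC.2 D' (lt_of_le_of_lt h1 hss) ⟨h2, h3⟩

end Multigraph

/-- Structure of circuits of `M_k(G)` for `k ≥ 1`: `C` is a circuit iff
`Δ(G⟨C⟩) = k`, `G⟨C⟩` has no leaves, and every component of `G⟨C⟩` has at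
least two cycles. -/
theorem stmt_16 (G : Multigraph) (k : ℕ) (hk : 1 ≤ k) (C : Finset G.E) :
    G.IsCircuitSet k C ↔
      (G.delta C = (k : ℤ) ∧
       (∀ v ∈ G.supp C, G.degIn C v ≠ 1) ∧
       ∀ v ∈ G.supp C, ∃ C₁ C₂ : Finset G.E,
         C₁ ⊆ G.compEdges C v ∧ C₂ ⊆ G.compEdges C v ∧
         G.IsCycleSet C₁ ∧ G.IsCycleSet C₂ ∧ C₁ ≠ C₂) := by
  have degA : ∀ (hnl : ∀ v ∈ G.supp C, G.degIn C v ≠ 1) (v : G.V),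
      ∀ u ∈ G.supp (G.compEdges C v), 2 ≤ G.degIn (G.compEdges C v) u := by
    intro hnl v u hu
    rw [Multigraph.degIn_comp hu]
    have huC : u ∈ G.supp C := Multigraph.supp_mono (Multigraph.compEdges_subset C v) hu
    have h1 := Multigraph.degIn_pos_of_mem_supp huC
    have h2 := hnl u huC
    omega
  constructor
  · intro hC
    have hnl := Multigraph.circuit_noleaf hk hC
    refine ⟨hC.1.2, hnl, fun v hv => ?_⟩
    exact Multigraph.two_cycles (Multigraph.conn_comp hv) (degA hnl v)
      (Multigraph.circuit_comp_delta hk hC hv)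
  · rintro ⟨hdelta, hleaf, hcyc⟩
    rw [Multigraph.circuit_iff hk]
    refine ⟨hdelta, fun D hDC => ?_⟩
    have hleaf2 : ∀ v ∈ G.supp C, 2 ≤ G.degIn C v := fun v hv => by
      have h1 := Multigraph.degIn_pos_of_mem_supp hv
      have h2 := hleaf v hv
      omega
    have hcomp : ∀ v ∈ G.supp C, 1 ≤ G.delta (G.compEdges C v) := by
      intro v hv
      obtain ⟨C₁, C₂, h1, h2, hc1, hc2, hne⟩ := hcyc v hv
      exact Multigraph.delta_ge_one_of_two_cycles (Multigraph.conn_comp hv)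
        (degA hleaf v) h1 h2 hc1 hc2 hne
    have := Multigraph.main_lt C hleaf2 hcomp D hDC
    omega
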